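/- For a rack X and a ∈ X, the maps (-1)^{n+1} h_a, where h_a(x_1,...,x_n) = (x_1,...,x_n,a), form a chain homotopy between the identity and the chain map *_a (applying *a to all coordinates); that is, ∂∘((-1)^{n+1}h_a) + ((-1)^n h_a)∘∂ = Id - *_a on C_n^R(X). -/

import Mathlib

/-- Delete the `i`-th coordinate of a tuple. -/
def delF {X : Type*} {n : ℕ} (i : Fin (n + 1)) (x : Fin (n + 1) → X) : Fin n → X :=
  fun j => x (i.succAbove j)

/-- Delete the `i`-th coordinate, acting by `* x_i` on the earlier coordinates. -/
def delS {X : Type*} (op : X → X → X) {n : ℕ} (i : Fin (n + 1)) (x : Fin (n + 1) → X) :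
    Fin n → X :=
  fun j => if (j : ℕ) < (i : ℕ) then op (x (Fin.castSucc j)) (x i) else x (i.succAbove j)

/-- The rack boundary of a generator (tuples indexed from 0; the paper's index `i ∈ {2,…,n}`
corresponds to `i ∈ {1,…,n}` here, with sign `(-1)^(i+1)`). -/
noncomputable def bdryGen {X : Type*} (op : X → X → X) {n : ℕ} (x : Fin (n + 1) → X) :
    (Fin n → X) →₀ ℤ :=
  ∑ i : Fin (n + 1), if (i : ℕ) = 0 then 0 else
    ((-1 : ℤ) ^ ((i : ℕ) + 1)) •
      (Finsupp.single (delF i x) 1 - Finsupp.single (delS op i x) 1)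

/-- The rack boundary map `∂ : C^R_{n+1}(X) → C^R_n(X)`. -/
noncomputable def bdry {X : Type*} (op : X → X → X) (n : ℕ) :
    ((Fin (n + 1) → X) →₀ ℤ) →ₗ[ℤ] ((Fin n → X) →₀ ℤ) :=
  Finsupp.lsum ℤ fun x => LinearMap.toSpanSingleton ℤ _ (bdryGen op x)

/-- The chain map `*_a`, applying `* a` to every coordinate. -/
noncomputable def starMap {X : Type*} (op : X → X → X) (a : X) (m : ℕ) :
    ((Fin m → X) →₀ ℤ) →ₗ[ℤ] ((Fin m → X) →₀ ℤ) :=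
  Finsupp.lsum ℤ fun x =>
    LinearMap.toSpanSingleton ℤ _ (Finsupp.single (fun j => op (x j) a) 1)

/-- The map `h_a`, appending `a` as the last coordinate. -/
noncomputable def hmap {X : Type*} (a : X) (m : ℕ) :
    ((Fin m → X) →₀ ℤ) →ₗ[ℤ] ((Fin (m + 1) → X) →₀ ℤ) :=
  Finsupp.lsum ℤ fun x => LinearMap.toSpanSingleton ℤ _ (Finsupp.single (Fin.snoc x a) 1)

/- Auxiliary lemmas -/

lemma delF_castSucc_snoc {X : Type*} {n : ℕ} (i : Fin (n+1)) (x : Fin (n+1) → X) (a : X) :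
    delF i.castSucc (Fin.snoc x a) = Fin.snoc (delF i x) a := by
  funext j
  induction j using Fin.lastCases with
  | last =>
    simp [delF, Fin.succAbove_castSucc_of_le i (Fin.last n) (Fin.le_last i), Fin.snoc_last,
      Fin.succ_last]
  | cast j =>
    simp [delF, Fin.castSucc_succAbove_castSucc, Fin.snoc_castSucc]

lemma delS_castSucc_snoc {X : Type*} {n : ℕ} (op : X → X → X) (i : Fin (n+1))
    (x : Fin (n+1) → X) (a : X) :
    delS op i.castSucc (Fin.snoc x a) = Fin.snoc (delS op i x) a := by
  funext j
  induction j using Fin.lastCases with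
  | last =>
    have : ¬ ((Fin.last n : ℕ) < ((i.castSucc : Fin (n+2)) : ℕ)) := by
      simp [Fin.lt_def]; omega
    simp only [delS, Fin.snoc_last,
      Fin.succAbove_castSucc_of_le i (Fin.last n) (Fin.le_last i), Fin.succ_last, if_neg this]
  | cast j =>
    simp only [delS, Fin.coe_castSucc, Fin.snoc_castSucc, Fin.castSucc_succAbove_castSucc]

lemma delF_last_snoc {X : Type*} {n : ℕ} (x : Fin (n+1) → X) (a : X) :
    delF (Fin.last (n+1)) (Fin.snoc x a) = x := by
  funext j; simp [delF, Fin.succAbove_last, Fin.snoc_castSucc]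

lemma delS_last_snoc {X : Type*} {n : ℕ} (op : X → X → X) (x : Fin (n+1) → X) (a : X) :
    delS op (Fin.last (n+1)) (Fin.snoc x a) = fun j => op (x j) a := by
  funext j
  have : (j : ℕ) < ((Fin.last (n+1) : Fin (n+2)) : ℕ) := by simp [j.isLt]
  simp [delS, this, Fin.snoc_castSucc, Fin.snoc_last]
  intro h; exact absurd j.isLt (by omega)

lemma bdry_single {X : Type*} (op : X → X → X) {m : ℕ} (y : Fin (m+1) → X) :
    bdry op m (Finsupp.single y 1) = bdryGen op y := by
  simp [bdry]

lemma hmap_single {X : Type*} (a : X) {m : ℕ} (y : Fin m → X) :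
    hmap a m (Finsupp.single y 1) = Finsupp.single (Fin.snoc y a) 1 := by
  simp [hmap]

lemma starMap_single {X : Type*} (op : X → X → X) (a : X) {m : ℕ} (y : Fin m → X) :
    starMap op a m (Finsupp.single y 1) = Finsupp.single (fun j => op (y j) a) 1 := by
  simp [starMap]

/-- For a rack `X` and `a ∈ X`, the maps `(-1)^{n+1} h_a` are a chain homotopy
between the identity and `*_a`:
`∂ ∘ ((-1)^{n+1} h_a) + ((-1)^n h_a) ∘ ∂ = Id - *_a` on `C^R_n(X)`
(stated here on chains of length `n + 1`). -/
theorem hmap_chain_homotopy {X : Type*} (op : X → X → X)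
    (hbij : ∀ b : X, Function.Bijective fun a => op a b)
    (hdist : ∀ a b c : X, op (op a b) c = op (op a c) (op b c)) (a : X) (n : ℕ) :
    (bdry op (n + 1)) ∘ₗ (((-1 : ℤ) ^ (n + 2)) • hmap a (n + 1)) +
      (((-1 : ℤ) ^ (n + 1)) • hmap a n) ∘ₗ (bdry op n) =
    LinearMap.id - starMap op a (n + 1) := by
  apply Finsupp.lhom_ext'
  intro x
  apply LinearMap.ext_ring
  simp only [LinearMap.comp_apply, Finsupp.lsingle_apply, LinearMap.add_apply,
    LinearMap.smul_apply, LinearMap.sub_apply, LinearMap.id_apply]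
  rw [hmap_single, starMap_single, map_smul, bdry_single, bdry_single]
  set S : (Fin (n+1) → X) →₀ ℤ :=
    ∑ i : Fin (n + 1), if (i : ℕ) = 0 then 0 else
      ((-1 : ℤ) ^ ((i : ℕ) + 1)) •
        (Finsupp.single (Fin.snoc (delF i x) a) 1 - Finsupp.single (Fin.snoc (delS op i x) a) 1)
    with hS
  set T : (Fin (n+1) → X) →₀ ℤ :=
    Finsupp.single x 1 - Finsupp.single (fun j => op (x j) a) 1 with hT
  have hA : bdryGen op (Fin.snoc x a : Fin (n+2) → X) = S + ((-1 : ℤ) ^ (n + 2)) • T := by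
    rw [bdryGen, Fin.sum_univ_castSucc]
    congr 1
    · rw [hS]
      refine Finset.sum_congr rfl fun i _ => ?_
      simp only [Fin.coe_castSucc, delF_castSucc_snoc, delS_castSucc_snoc]
    · simp [Fin.val_last, delF_last_snoc, delS_last_snoc, hT]
  have hB : hmap a n (bdryGen op x) = S := by
    rw [bdryGen, map_sum, hS]
    refine Finset.sum_congr rfl fun i _ => ?_
    split
    · simp
    · rw [map_smul, map_sub, hmap_single, hmap_single]
  rw [hA, hB, smul_add, smul_smul, ← pow_add]
  have h1 : ((-1 : ℤ)) ^ (n + 2 + (n + 2)) = 1 := Even.neg_one_pow ⟨n + 2, by ring⟩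
  have h2 : ((-1 : ℤ)) ^ (n + 2) + (-1 : ℤ) ^ (n + 1) = 0 := by rw [pow_succ]; ring
  rw [h1, one_smul, add_right_comm, ← add_smul, h2, zero_smul, zero_add]
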